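/- Let p and q be coprime positive integers. Then, as rational numbers, (1/(pq))·∑_{n=1}^{pq−1} (2·∑_{i=1}^{n} j(i)) = −(p−1)(p+1)(q−1)(q+1)/(3pq). (The left-hand side is the integral over the unit circle of the ω-signatures of the (p,q) torus knot, i.e. its L² signature ∫_{S¹} σ_ω, since the ω-signature at ω = e^{2πix} with x ∈ (n/pq, (n+1)/pq) equals 2·∑_{i=1}^{n} j(i).) -/

import Mathlib

open scoped Classical

/-- The signature jump function `j_{p,q}(n/pq)` of the `(p,q)` torus knot:
`0` if `p ∣ n` or `q ∣ n`; `1` if `n = qx + py` with `0 < x < p`, `0 < y < q`;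
`−1` otherwise. -/
noncomputable def torusJump (p q n : ℤ) : ℤ :=
  if p ∣ n ∨ q ∣ n then 0
  else if ∃ x y : ℤ, 0 < x ∧ x < p ∧ 0 < y ∧ y < q ∧ n = q * x + p * y then 1
  else -1

open Finset

private lemma dvd_of_dvd_mul_left' (p q a b x : ℤ) (hab : a * p + b * q = 1)
    (h : p ∣ q * x) : p ∣ x := by
  obtain ⟨k, hk⟩ := h
  exact ⟨a * x + b * k, by linear_combination (-x) * hab + b * hk⟩

private lemma emod_eq_self (p t s : ℤ) (h : p ∣ t - s) (h0 : 0 ≤ s)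
    (h1 : s < p) : t % p = s := by
  have h2 : s ≡ t [ZMOD p] := Int.modEq_iff_dvd.mpr h
  rw [← h2, Int.emod_eq_of_lt h0 h1]

private lemma sum_T_eq_grid (p q a b : ℤ) (hp : 0 < p) (hq : 0 < q)
    (hab : a * p + b * q = 1) :
    ∑ z ∈ Icc 1 (p - 1) ×ˢ Icc 1 (q - 1),
        (if q * z.1 + p * z.2 < p * q then p * q - (q * z.1 + p * z.2)
          else (q * z.1 + p * z.2) - 2 * (p * q)) =
    ∑ n ∈ (Icc 1 (p * q - 1)).filter (fun n => ¬(p ∣ n ∨ q ∣ n)),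
        (p * q - n) * torusJump p q n := by
  have hcop : IsCoprime p q := ⟨a, b, hab⟩
  have hab' : b * q + a * p = 1 := by linarith
  -- p ∤ x for x in range
  have hrange : ∀ x : ℤ, 1 ≤ x → x ≤ p - 1 → ¬ p ∣ x := by
    intro x h1 h2 hd
    have := Int.le_of_dvd (by omega) hd
    omega
  have hrangeq : ∀ y : ℤ, 1 ≤ y → y ≤ q - 1 → ¬ q ∣ y := by
    intro y h1 h2 hd
    have := Int.le_of_dvd (by omega) hd
    omega
  refine Finset.sum_nbij'
    (i := fun z => if q * z.1 + p * z.2 < p * q then q * z.1 + p * z.2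
      else q * z.1 + p * z.2 - p * q)
    (j := fun n => (b * n % p, a * n % q)) ?_ ?_ ?_ ?_ ?_
  · -- maps grid to T
    rintro ⟨x, y⟩ hz
    simp only [mem_product, mem_Icc] at hz
    obtain ⟨⟨hx1, hx2⟩, ⟨hy1, hy2⟩⟩ := hz
    have hpm : ¬ p ∣ q * x + p * y := by
      intro hd
      have : p ∣ q * x := (dvd_add_right ⟨y, rfl⟩).mp (by rwa [add_comm] at hd)
      exact hrange x hx1 hx2 (dvd_of_dvd_mul_left' p q a b x hab this)
    have hqm : ¬ q ∣ q * x + p * y := by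
      intro hd
      have : q ∣ p * y := (dvd_add_right ⟨x, rfl⟩).mp hd
      exact hrangeq y hy1 hy2 (dvd_of_dvd_mul_left' q p b a y hab' this)
    have hm1 : q + p ≤ q * x + p * y := by nlinarith
    have hm2 : q * x + p * y ≤ 2 * (p * q) - p - q := by nlinarith
    have hne : q * x + p * y ≠ p * q := by
      intro h
      exact hpm (h ▸ ⟨q, rfl⟩)
    simp only [mem_filter, mem_Icc]
    split_ifs with hlt
    · exact ⟨⟨by omega, by omega⟩, by tauto⟩
    · refine ⟨⟨by omega, by omega⟩, ?_⟩
      rintro (hd | hd)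
      · exact hpm (by simpa using dvd_add hd (⟨q, rfl⟩ : p ∣ p * q))
      · exact hqm (by simpa using dvd_add hd (⟨p, mul_comm p q⟩ : q ∣ p * q))
  · -- maps T to grid
    intro n hn
    simp only [mem_filter, mem_Icc, not_or] at hn
    obtain ⟨⟨hn1, hn2⟩, hnp, hnq⟩ := hn
    have hx0 : 0 ≤ b * n % p := Int.emod_nonneg _ (by omega)
    have hxp : b * n % p < p := Int.emod_lt_of_pos _ hp
    have hy0 : 0 ≤ a * n % q := Int.emod_nonneg _ (by omega)
    have hyq : a * n % q < q := Int.emod_lt_of_pos _ hq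
    have hxne : b * n % p ≠ 0 := by
      intro h0
      have hd : p ∣ b * n := Int.dvd_of_emod_eq_zero h0
      obtain ⟨k, hk⟩ := hd
      exact hnp ⟨a * n + q * k, by linear_combination (-n) * hab + q * hk⟩
    have hyne : a * n % q ≠ 0 := by
      intro h0
      have hd : q ∣ a * n := Int.dvd_of_emod_eq_zero h0
      obtain ⟨k, hk⟩ := hd
      exact hnq ⟨b * n + p * k, by linear_combination (-n) * hab' + p * hk⟩
    simp only [mem_product, mem_Icc]
    omega
  · -- left inverse : ψ (φ z) = z on grid
    rintro ⟨x, y⟩ hz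
    simp only [mem_product, mem_Icc] at hz
    obtain ⟨⟨hx1, hx2⟩, ⟨hy1, hy2⟩⟩ := hz
    have key : ∀ m : ℤ, p * q ∣ m - (q * x + p * y) →
        (b * m % p, a * m % q) = ((x : ℤ), (y : ℤ)) := by
      intro m hd
      obtain ⟨t, ht⟩ := hd
      have e1 : b * m % p = x := by
        refine emod_eq_self p _ _ ⟨b * q * t + b * y - a * x, ?_⟩ (by omega) (by omega)
        linear_combination b * ht + x * hab
      have e2 : a * m % q = y := by
        refine emod_eq_self q _ _ ⟨a * p * t + a * x - b * y, ?_⟩ (by omega) (by omega)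
        linear_combination a * ht + y * hab'
      rw [e1, e2]
    dsimp only
    split_ifs with hlt
    · exact key _ ⟨0, by ring⟩
    · exact key _ ⟨-1, by ring⟩
  · -- right inverse : φ (ψ n) = n on T
    intro n hn
    simp only [mem_filter, mem_Icc, not_or] at hn
    obtain ⟨⟨hn1, hn2⟩, hnp, hnq⟩ := hn
    set x := b * n % p with hxdef
    set y := a * n % q with hydef
    have hx0 : 0 ≤ x := Int.emod_nonneg _ (by omega)
    have hxp : x < p := Int.emod_lt_of_pos _ hp
    have hy0 : 0 ≤ y := Int.emod_nonneg _ (by omega)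
    have hyq : y < q := Int.emod_lt_of_pos _ hq
    have hxne : x ≠ 0 := by
      intro h0
      have hd : p ∣ b * n := Int.dvd_of_emod_eq_zero h0
      obtain ⟨k, hk⟩ := hd
      exact hnp ⟨a * n + q * k, by linear_combination (-n) * hab + q * hk⟩
    have hyne : y ≠ 0 := by
      intro h0
      have hd : q ∣ a * n := Int.dvd_of_emod_eq_zero h0
      obtain ⟨k, hk⟩ := hd
      exact hnq ⟨b * n + p * k, by linear_combination (-n) * hab' + p * hk⟩
    have hx1 : 1 ≤ x := by omega
    have hy1 : 1 ≤ y := by omega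
    have hqx1 : q * 1 ≤ q * x := by
      apply mul_le_mul_of_nonneg_left hx1 (by omega)
    have hpy1 : p * 1 ≤ p * y := by
      apply mul_le_mul_of_nonneg_left hy1 (by omega)
    have hqx2 : q * x ≤ q * (p - 1) := by
      apply mul_le_mul_of_nonneg_left (by omega) (by omega)
    have hpy2 : p * y ≤ p * (q - 1) := by
      apply mul_le_mul_of_nonneg_left (by omega) (by omega)
    have hb : p * (b * n / p) + b * n % p = b * n := Int.mul_ediv_add_emod _ _
    have ha : q * (a * n / q) + a * n % q = a * n := Int.mul_ediv_add_emod _ _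
    have h1 : p ∣ q * x + p * y - n :=
      ⟨q * (b * n / p) * (-1) + y - a * n, by linear_combination q * hb + n * hab⟩
    have h2 : q ∣ q * x + p * y - n :=
      ⟨p * (a * n / q) * (-1) + x - b * n, by linear_combination p * ha + n * hab'⟩
    obtain ⟨t, ht⟩ := hcop.mul_dvd h1 h2
    have hm1 : q + p ≤ q * x + p * y := by nlinarith
    have hm2 : q * x + p * y ≤ 2 * (p * q) - p - q := by nlinarith
    have hpq0 : 0 < p * q := mul_pos hp hq
    have ht0 : 0 ≤ t := by
      by_contra h
      push_neg at h
      have h2 : p * q * t ≤ p * q * (-1) :=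
        mul_le_mul_of_nonneg_left (by omega) (le_of_lt hpq0)
      linarith
    have ht1 : t ≤ 1 := by
      by_contra h
      push_neg at h
      have h2 : p * q * 2 ≤ p * q * t :=
        mul_le_mul_of_nonneg_left (by omega) (le_of_lt hpq0)
      linarith
    dsimp only
    interval_cases t
    · have heq : q * x + p * y = n := by linarith
      rw [if_pos (by linarith), heq]
    · have heq : q * x + p * y = n + p * q := by linarith
      rw [if_neg (by linarith)]
      linarith
  · -- values agree
    rintro ⟨x, y⟩ hz
    simp only [mem_product, mem_Icc] at hz
    obtain ⟨⟨hx1, hx2⟩, ⟨hy1, hy2⟩⟩ := hz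
    have hpm : ¬ p ∣ q * x + p * y := by
      intro hd
      have : p ∣ q * x := (dvd_add_right ⟨y, rfl⟩).mp (by rwa [add_comm] at hd)
      exact hrange x hx1 hx2 (dvd_of_dvd_mul_left' p q a b x hab this)
    have hqm : ¬ q ∣ q * x + p * y := by
      intro hd
      have : q ∣ p * y := (dvd_add_right ⟨x, rfl⟩).mp hd
      exact hrangeq y hy1 hy2 (dvd_of_dvd_mul_left' q p b a y hab' this)
    dsimp only
    split_ifs with hlt
    · rw [torusJump, if_neg (by tauto),
        if_pos ⟨x, y, by omega, by omega, by omega, by omega, rfl⟩]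
      ring
    · have hnd : ¬ (p ∣ q * x + p * y - p * q ∨ q ∣ q * x + p * y - p * q) := by
        rintro (hd | hd)
        · exact hpm (by simpa using dvd_add hd (⟨q, rfl⟩ : p ∣ p * q))
        · exact hqm (by simpa using dvd_add hd (⟨p, mul_comm p q⟩ : q ∣ p * q))
      rw [torusJump, if_neg hnd, if_neg ?_]
      · ring
      · rintro ⟨x', y', hx'0, hx'p, hy'0, hy'q, heq⟩
        have hdx : p ∣ x - x' := by
          refine dvd_of_dvd_mul_left' p q a b _ hab ⟨y' - y + q, ?_⟩
          linear_combination heq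
        obtain ⟨k, hk⟩ := hdx
        have hb1 : p * k < p * 1 := by linarith
        have hb2 : p * (-1) < p * k := by linarith
        have hk1 : k < 1 := lt_of_mul_lt_mul_left hb1 hp.le
        have hk2 : -1 < k := lt_of_mul_lt_mul_left hb2 hp.le
        have hk0 : k = 0 := by omega
        rw [hk0, mul_zero] at hk
        have hxx : x = x' := by omega
        have hpy : p * (y - y') = p * q := by
          rw [hxx] at heq
          linear_combination heq
        have hyy : y - y' = q := mul_left_cancel₀ (by omega : p ≠ 0) hpy
        omega

private lemma sum_emod_perm (p q a b : ℤ) (hp : 0 < p) (hab : a * p + b * q = 1)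
    (F : ℤ → ℤ) :
    ∑ x ∈ Icc 1 (p - 1), F (q * x % p) = ∑ x ∈ Icc 1 (p - 1), F x := by
  refine Finset.sum_nbij' (i := fun x => q * x % p) (j := fun x => b * x % p)
    ?_ ?_ ?_ ?_ ?_
  · intro x hx
    rw [mem_Icc] at hx
    have h0 : 0 ≤ q * x % p := Int.emod_nonneg _ (by omega)
    have h1 : q * x % p < p := Int.emod_lt_of_pos _ hp
    have hne : q * x % p ≠ 0 := by
      intro h
      have hd : p ∣ q * x := Int.dvd_of_emod_eq_zero h
      obtain ⟨k, hk⟩ := hd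
      have : p ∣ x := ⟨a * x + b * k, by linear_combination (-x) * hab + b * hk⟩
      have := Int.le_of_dvd (by omega) this
      omega
    rw [mem_Icc]; omega
  · intro x hx
    rw [mem_Icc] at hx
    have h0 : 0 ≤ b * x % p := Int.emod_nonneg _ (by omega)
    have h1 : b * x % p < p := Int.emod_lt_of_pos _ hp
    have hne : b * x % p ≠ 0 := by
      intro h
      have hd : p ∣ b * x := Int.dvd_of_emod_eq_zero h
      obtain ⟨k, hk⟩ := hd
      have : p ∣ x := ⟨a * x + q * k, by linear_combination (-x) * hab + q * hk⟩
      have := Int.le_of_dvd (by omega) this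
      omega
    rw [mem_Icc]; omega
  · intro x hx
    rw [mem_Icc] at hx
    have he : p * (q * x / p) + q * x % p = q * x := Int.mul_ediv_add_emod _ _
    exact emod_eq_self p _ _ ⟨-(a * x) - b * (q * x / p), by
      linear_combination b * he + x * hab⟩ (by omega) (by omega)
  · intro x hx
    rw [mem_Icc] at hx
    have he : p * (b * x / p) + b * x % p = b * x := Int.mul_ediv_add_emod _ _
    exact emod_eq_self p _ _ ⟨-(a * x) - q * (b * x / p), by
      linear_combination q * he + x * hab⟩ (by omega) (by omega)
  · intro x _
    rfl

private lemma Ioc_succ (a m : ℤ) (h : a ≤ m) :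
    Ioc a (m + 1) = insert (m + 1) (Ioc a m) := by
  ext z; simp only [mem_Ioc, mem_insert]; omega

private lemma sum_Ioc_id (a : ℤ) : ∀ m : ℤ, a ≤ m →
    2 * ∑ y ∈ Ioc a m, y = (m + a + 1) * (m - a) := by
  refine Int.le_induction ?_ ?_
  · simp
  · intro m hm ih
    rw [Ioc_succ a m hm, Finset.sum_insert (by simp)]
    ring_nf
    ring_nf at ih
    linarith

private lemma sum_Ioc_sq (a : ℤ) : ∀ m : ℤ, a ≤ m →
    6 * ∑ y ∈ Ioc a m, y ^ 2 =
      m * (m + 1) * (2 * m + 1) - a * (a + 1) * (2 * a + 1) := by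
  refine Int.le_induction ?_ ?_
  · simp
  · intro m hm ih
    rw [Ioc_succ a m hm, Finset.sum_insert (by simp)]
    ring_nf
    ring_nf at ih
    linarith

private lemma card_Ioc_int (a m : ℤ) (h : a ≤ m) :
    ((Ioc a m).card : ℤ) = m - a := by
  rw [Int.card_Ioc]; omega

private lemma split_Ioc (a k m : ℤ) (h1 : a ≤ k) (h2 : k ≤ m) (f : ℤ → ℤ) :
    ∑ y ∈ Ioc a m, f y = ∑ y ∈ Ioc a k, f y + ∑ y ∈ Ioc k m, f y := by
  rw [← Finset.sum_union]
  · congr 1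
    ext z; simp only [mem_Ioc, mem_union]; omega
  · rw [Finset.disjoint_left]
    intro z hz hz'
    simp only [mem_Ioc] at hz hz'
    omega

private lemma sum_linear (c e a m : ℤ) (h : a ≤ m) :
    2 * ∑ y ∈ Ioc a m, (c + e * y) = 2 * (m - a) * c + e * ((m + a + 1) * (m - a)) := by
  rw [Finset.sum_add_distrib, ← Finset.mul_sum, Finset.sum_const, nsmul_eq_mul]
  rw [Int.card_Ioc]
  have h1 : ((m - a).toNat : ℤ) = m - a := by omega
  have h2 := sum_Ioc_id a m h
  rw [h1]
  linear_combination e * h2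

private lemma torus_inner_sum (p q x : ℤ) (hp : 0 < p) (hq : 0 < q)
    (hx1 : 1 ≤ x) (hx2 : x ≤ p - 1) (hnd : ¬ p ∣ q * x) :
    2 * p * (∑ y ∈ Icc 1 (q - 1),
        (if q * x + p * y < p * q then p * q - (q * x + p * y)
          else (q * x + p * y) - 2 * (p * q)))
      = 2 * p * (q - 1) * (p * q - q * x) - p ^ 2 * q * (q - 1) + 2 * q ^ 2 * x ^ 2
        - 2 * p * q * x * (q + 1) + 2 * p * (q * x % p) * (q + 1) - 2 * (q * x % p) ^ 2 := by
  set r := q * x % p with hrdef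
  set d := q * x / p with hddef
  have hrd : p * d + r = q * x := Int.mul_ediv_add_emod _ _
  have hr0 : 0 < r := by
    have h0 : 0 ≤ r := Int.emod_nonneg _ (by omega)
    have : r ≠ 0 := fun h => hnd (Int.dvd_of_emod_eq_zero h)
    omega
  have hrp : r < p := Int.emod_lt_of_pos _ hp
  have hqx1 : q * 1 ≤ q * x := mul_le_mul_of_nonneg_left hx1 (by omega)
  have hqx2 : q * x ≤ q * (p - 1) := mul_le_mul_of_nonneg_left (by omega) (by omega)
  have hd0 : 0 ≤ d := by
    by_contra h
    push_neg at h
    have : p * d ≤ p * (-1) := mul_le_mul_of_nonneg_left (by omega) (by omega)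
    nlinarith
  have hdq : d ≤ q - 1 := by
    by_contra h
    push_neg at h
    have : p * q ≤ p * d := mul_le_mul_of_nonneg_left (by omega) (by omega)
    nlinarith
  have hicc : Icc (1 : ℤ) (q - 1) = Ioc 0 (q - 1) := by
    ext z; simp only [mem_Icc, mem_Ioc]; omega
  set K := q - 1 - d with hKdef
  have hK0 : (0 : ℤ) ≤ K := by omega
  have hK1 : K ≤ q - 1 := by omega
  rw [hicc, split_Ioc 0 K (q - 1) hK0 hK1]
  have hif1 : ∑ y ∈ Ioc 0 K, (if q * x + p * y < p * q then p * q - (q * x + p * y)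
      else (q * x + p * y) - 2 * (p * q)) = ∑ y ∈ Ioc 0 K, ((p * q - q * x) + (-p) * y) := by
    refine Finset.sum_congr rfl fun y hy => ?_
    rw [mem_Ioc] at hy
    rw [if_pos]
    · ring
    · have : p * y ≤ p * K := mul_le_mul_of_nonneg_left (by omega) (by omega)
      nlinarith
  have hif2 : ∑ y ∈ Ioc K (q - 1), (if q * x + p * y < p * q then p * q - (q * x + p * y)
      else (q * x + p * y) - 2 * (p * q)) = ∑ y ∈ Ioc K (q - 1), ((q * x - 2 * (p * q)) + p * y) := by
    refine Finset.sum_congr rfl fun y hy => ?_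
    rw [mem_Ioc] at hy
    rw [if_neg]
    · ring
    · have : p * (K + 1) ≤ p * y := mul_le_mul_of_nonneg_left (by omega) (by omega)
      push_neg
      nlinarith
  rw [hif1, hif2]
  have e1 := sum_linear (p * q - q * x) (-p) 0 K hK0
  have e2 := sum_linear (q * x - 2 * (p * q)) p K (q - 1) hK1
  linear_combination p * e1 + p * e2 + (2 * (q * x - p * q - p - p * d + r)) * hrd

private lemma sum_swap_tri (N : ℤ) (f : ℤ → ℤ) :
    ∑ n ∈ Icc 1 N, ∑ i ∈ Icc 1 n, f i = ∑ i ∈ Icc 1 N, (N + 1 - i) * f i := by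
  calc ∑ n ∈ Icc 1 N, ∑ i ∈ Icc 1 n, f i
      = ∑ n ∈ Icc 1 N, ∑ i ∈ (Icc 1 N).filter (fun i => i ≤ n), f i := by
        refine Finset.sum_congr rfl fun n hn => ?_
        rw [mem_Icc] at hn
        congr 1
        ext z; simp only [mem_Icc, mem_filter]; omega
    _ = ∑ n ∈ Icc 1 N, ∑ i ∈ Icc 1 N, if i ≤ n then f i else 0 := by
        simp [Finset.sum_filter]
    _ = ∑ i ∈ Icc 1 N, ∑ n ∈ Icc 1 N, if i ≤ n then f i else 0 := Finset.sum_comm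
    _ = ∑ i ∈ Icc 1 N, (N + 1 - i) * f i := by
        refine Finset.sum_congr rfl fun i hi => ?_
        rw [mem_Icc] at hi
        rw [← Finset.sum_filter]
        have h1 : (Icc 1 N).filter (fun n => i ≤ n) = Icc i N := by
          ext z; simp only [mem_Icc, mem_filter]; omega
        rw [h1, Finset.sum_const, Int.card_Icc, nsmul_eq_mul]
        have : ((N + 1 - i).toNat : ℤ) = N + 1 - i := by omega
        rw [this]

private lemma sum_poly (X : Finset ℤ) (c0 c1 c2 c3 c4 : ℤ) (u : ℤ → ℤ) :
    ∑ x ∈ X, (c0 + c1 * x + c2 * x ^ 2 + c3 * u x + c4 * (u x) ^ 2)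
      = c0 * X.card + c1 * (∑ x ∈ X, x) + c2 * (∑ x ∈ X, x ^ 2)
        + c3 * (∑ x ∈ X, u x) + c4 * (∑ x ∈ X, (u x) ^ 2) := by
  rw [Finset.sum_add_distrib, Finset.sum_add_distrib, Finset.sum_add_distrib,
    Finset.sum_add_distrib, Finset.sum_const, ← Finset.mul_sum, ← Finset.mul_sum,
    ← Finset.mul_sum, ← Finset.mul_sum, nsmul_eq_mul, mul_comm (X.card : ℤ) c0]

/-- The `L²` signature of the `(p,q)` torus knot: the integral over the unit circle of the
`ω`-signatures, namely `(1/pq) ∑_{n=1}^{pq−1} (2 ∑_{i=1}^{n} j(i))`, equals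
`−(p−1)(p+1)(q−1)(q+1)/(3pq)`. -/
theorem L2_signature_torus_knot
    (p q : ℤ) (hp : 0 < p) (hq : 0 < q) (hpq : IsCoprime p q) :
    (1 / ((p : ℚ) * (q : ℚ))) *
        ∑ n ∈ Finset.Icc (1 : ℤ) (p * q - 1),
          (2 * ∑ i ∈ Finset.Icc (1 : ℤ) n, (torusJump p q i : ℚ)) =
      -(((p : ℚ) - 1) * ((p : ℚ) + 1) * ((q : ℚ) - 1) * ((q : ℚ) + 1)) /
        (3 * (p : ℚ) * (q : ℚ)) := by
  obtain ⟨a, b, hab⟩ := hpq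
  set Ssum : ℤ := ∑ n ∈ Icc 1 (p * q - 1), ∑ i ∈ Icc 1 n, torusJump p q i with hSdef
  have hS : 6 * Ssum = -((p - 1) * (p + 1) * (q - 1) * (q + 1)) := by
    have hstep : Ssum = ∑ x ∈ Icc 1 (p - 1), ∑ y ∈ Icc 1 (q - 1),
        (if q * x + p * y < p * q then p * q - (q * x + p * y)
          else (q * x + p * y) - 2 * (p * q)) := by
      rw [hSdef, sum_swap_tri]
      rw [← Finset.sum_product']
      rw [sum_T_eq_grid p q a b hp hq hab]
      rw [Finset.sum_filter]
      refine Finset.sum_congr rfl fun i hi => ?_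
      by_cases h : p ∣ i ∨ q ∣ i
      · rw [if_neg (by tauto), torusJump, if_pos h]
        ring
      · rw [if_pos h]
        ring
    -- inner sums
    have hps : 2 * p * Ssum = ∑ x ∈ Icc 1 (p - 1),
        (2 * p * (q - 1) * (p * q - q * x) - p ^ 2 * q * (q - 1) + 2 * q ^ 2 * x ^ 2
          - 2 * p * q * x * (q + 1) + 2 * p * (q * x % p) * (q + 1) - 2 * (q * x % p) ^ 2) := by
      rw [hstep, Finset.mul_sum]
      refine Finset.sum_congr rfl fun x hx => ?_
      rw [mem_Icc] at hx
      refine torus_inner_sum p q x hp hq hx.1 hx.2 ?_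
      intro hd
      have hdx : p ∣ x := dvd_of_dvd_mul_left' p q a b x hab hd
      have := Int.le_of_dvd (by omega) hdx
      omega
    set Sx : ℤ := ∑ x ∈ Icc 1 (p - 1), x with hSxdef
    set Sx2 : ℤ := ∑ x ∈ Icc 1 (p - 1), x ^ 2 with hSx2def
    have hSr : ∑ x ∈ Icc 1 (p - 1), (q * x % p) = Sx :=
      sum_emod_perm p q a b hp hab (fun t => t)
    have hSr2 : ∑ x ∈ Icc 1 (p - 1), (q * x % p) ^ 2 = Sx2 :=
      sum_emod_perm p q a b hp hab (fun t => t ^ 2)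
    have hicc : Icc (1 : ℤ) (p - 1) = Ioc 0 (p - 1) := by
      ext z; simp only [mem_Icc, mem_Ioc]; omega
    have hgx : 2 * Sx = p * (p - 1) := by
      rw [hSxdef, hicc]
      have := sum_Ioc_id 0 (p - 1) (by omega)
      linarith
    have hgx2 : 6 * Sx2 = (p - 1) * p * (2 * p - 1) := by
      rw [hSx2def, hicc]
      have := sum_Ioc_sq 0 (p - 1) (by omega)
      rw [this]
      ring
    -- expand the sum of the polynomial
    have hcard : (((Icc (1:ℤ) (p-1)).card : ℕ) : ℤ) = p - 1 := by
      rw [Int.card_Icc]; omega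
    have hshape : ∑ x ∈ Icc 1 (p - 1),
        (2 * p * (q - 1) * (p * q - q * x) - p ^ 2 * q * (q - 1) + 2 * q ^ 2 * x ^ 2
          - 2 * p * q * x * (q + 1) + 2 * p * (q * x % p) * (q + 1) - 2 * (q * x % p) ^ 2)
        = ∑ x ∈ Icc 1 (p - 1),
        (p ^ 2 * q * (q - 1) + (-(4 * p * q ^ 2)) * x + (2 * q ^ 2) * x ^ 2
          + (2 * p * (q + 1)) * (q * x % p) + (-2) * (q * x % p) ^ 2) :=
      Finset.sum_congr rfl fun x _ => by ring
    rw [hshape, sum_poly, hcard, hSr, hSr2] at hps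
    have hp6 : p * (6 * Ssum) = p * (-((p - 1) * (p + 1) * (q - 1) * (q + 1))) := by
      linear_combination 3 * hps + (-(6 * p * q ^ 2) + 3 * p * q + 3 * p) * hgx
        + (q ^ 2 - 1) * hgx2
    exact mul_left_cancel₀ (by omega : p ≠ 0) hp6
  -- final rational computation
  have hsumq : ∑ n ∈ Icc (1 : ℤ) (p * q - 1), (2 * ∑ i ∈ Icc (1 : ℤ) n, ((torusJump p q i : ℤ) : ℚ))
      = ((2 * Ssum : ℤ) : ℚ) := by
    rw [← Finset.mul_sum]
    push_cast [hSdef]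
    ring
  rw [hsumq]
  have hp0 : (p : ℚ) ≠ 0 := Int.cast_ne_zero.mpr (by omega)
  have hq0 : (q : ℚ) ≠ 0 := Int.cast_ne_zero.mpr (by omega)
  have hSQ : 6 * ((Ssum : ℤ) : ℚ) = -(((p : ℚ) - 1) * ((p : ℚ) + 1) * ((q : ℚ) - 1) * ((q : ℚ) + 1)) := by
    have := congrArg (fun z : ℤ => (z : ℚ)) hS
    push_cast at this
    linarith
  push_cast
  field_simp
  linear_combination hSQ
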